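/- arXiv:2501.03852 — 6 statements merged into one kernel-verified Lean document; each statement's English description precedes it below -/
import Mathlib

section
/- Let p be a prime, X = (V, E, s, t) a finite connected directed multigraph with V nonempty, and a ∈ ℤ_p^× a p-adic unit. Then the derived graphs X(ℤ/p^nℤ, α_n), where α_n is the constant voltage assignment with value a mod p^n, are connected for all n ≥ 1 if and only if X admits a closed walk whose weight is coprime to p. -/
/-- A directed multigraph: a vertex type `V`, an edge type `E`, and source/target maps. -/
structure DirMultigraph (V E : Type*) where
  s : E → V
  t : E → V

/-- The adjacency relation: there is an edge with source `x` and target `y`. -/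
def DirMultigraph.Adj {V E : Type*} (X : DirMultigraph V E) (x y : V) : Prop :=
  ∃ e, X.s e = x ∧ X.t e = y

/-- A directed multigraph is connected if any two vertices are related by the
reflexive-transitive-symmetric closure of the adjacency relation. -/
def DirMultigraph.Connected {V E : Type*} (X : DirMultigraph V E) : Prop :=
  ∀ x y : V, Relation.EqvGen X.Adj x y

/-- The derived graph `X(G, α)` of a voltage assignment `α : E → G`: vertices `V × G`,
edges `E × G`, where the edge `(e, σ)` goes from `(s e, σ)` to `(t e, σ + α e)`. -/
def DirMultigraph.derived {V E G : Type*} [AddCommGroup G]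
    (X : DirMultigraph V E) (α : E → G) : DirMultigraph (V × G) (E × G) where
  s := fun q => (X.s q.1, q.2)
  t := fun q => (X.t q.1, q.2 + α q.1)

/-- `WalkW X u v k` holds if there is a walk from `u` to `v` in which edges may be traversed
forwards or backwards, of weight `k` = (number of forwards steps) − (number of backwards
steps). -/
inductive DirMultigraph.WalkW {V E : Type*} (X : DirMultigraph V E) : V → V → ℤ → Prop
  | nil (v : V) : WalkW X v v 0
  | fwd {u v w : V} {k : ℤ} (e : E) (h : WalkW X u v k) (hs : X.s e = v) (ht : X.t e = w) :
      WalkW X u w (k + 1)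
  | bwd {u v w : V} {k : ℤ} (e : E) (h : WalkW X u v k) (ht : X.t e = v) (hs : X.s e = w) :
      WalkW X u w (k - 1)

namespace Aux
open DirMultigraph
variable {V E : Type*} (X : DirMultigraph V E)

theorem walkW_trans {u v w : V} {k l : ℤ} (h1 : X.WalkW u v k) (h2 : X.WalkW v w l) :
    X.WalkW u w (k + l) := by
  induction h2 with
  | nil => simpa using h1
  | fwd e h hs ht ih =>
      have := WalkW.fwd e ih hs ht
      convert this using 1; ring
  | bwd e h ht hs ih =>
      have := WalkW.bwd e ih ht hs
      convert this using 1; ring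

theorem walkW_symm {u v : V} {k : ℤ} (h : X.WalkW u v k) : X.WalkW v u (-k) := by
  induction h with
  | nil => exact neg_zero (G := ℤ) ▸ WalkW.nil _
  | fwd e h hs ht ih =>
      have step : X.WalkW _ _ (0 - 1) := WalkW.bwd e (WalkW.nil _) ht hs
      have := walkW_trans X step ih
      convert this using 1; ring
  | bwd e h ht hs ih =>
      have step : X.WalkW _ _ (0 + 1) := WalkW.fwd e (WalkW.nil _) hs ht
      have := walkW_trans X step ih
      convert this using 1; ring

theorem walkW_of_eqvGen {u v : V} (h : Relation.EqvGen X.Adj u v) : ∃ k, X.WalkW u v k := by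
  induction h with
  | rel x y h => obtain ⟨e, hs, ht⟩ := h; exact ⟨0 + 1, WalkW.fwd e (WalkW.nil x) hs ht⟩
  | refl x => exact ⟨0, WalkW.nil x⟩
  | symm x y _ ih => obtain ⟨k, hk⟩ := ih; exact ⟨-k, walkW_symm X hk⟩
  | trans x y z _ _ ih1 ih2 =>
      obtain ⟨k, hk⟩ := ih1; obtain ⟨l, hl⟩ := ih2
      exact ⟨k + l, walkW_trans X hk hl⟩

theorem eqvGen_of_walkW {u v : V} {k : ℤ} (h : X.WalkW u v k) :
    Relation.EqvGen X.Adj u v := by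
  induction h with
  | nil => exact .refl _
  | fwd e h hs ht ih => exact .trans _ _ _ ih (.rel _ _ ⟨e, hs, ht⟩)
  | bwd e h ht hs ih => exact .trans _ _ _ ih (.symm _ _ (.rel _ _ ⟨e, hs, ht⟩))

theorem walkW_mul {v : V} {k : ℤ} (h : X.WalkW v v k) (j : ℤ) : X.WalkW v v (j * k) := by
  induction j using Int.induction_on with
  | zero => simpa using WalkW.nil v
  | succ i ih =>
      have := walkW_trans X ih h
      convert this using 1; ring
  | pred i ih =>
      have := walkW_trans X ih (walkW_symm X h)
      convert this using 1; ring

theorem walkW_derived {G : Type*} [AddCommGroup G] (c : G) {u v : V} {k : ℤ}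
    (h : X.WalkW u v k) (σ : G) :
    (X.derived (fun _ : E => c)).WalkW (u, σ) (v, σ + k • c) k := by
  induction h with
  | nil => simpa using WalkW.nil (X := X.derived (fun _ : E => c)) (_, σ)
  | @fwd v' w k e h hs ht ih =>
      rw [add_smul, one_smul, ← add_assoc]
      exact WalkW.fwd (e, σ + k • c) ih (by simp [derived, hs]) (by simp [derived, ht])
  | @bwd v' w k e h ht hs ih =>
      have hts : (X.derived (fun _ : E => c)).t (e, σ + (k - 1) • c) = (v', σ + k • c) := by
        simp only [derived]
        rw [sub_smul, one_smul, ht]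
        abel_nf
      exact WalkW.bwd (e, σ + (k - 1) • c) ih hts (by simp [derived, hs])

theorem eqvGen_derived_proj {G : Type*} [AddCommGroup G] (c : G) (x y : V × G)
    (h : Relation.EqvGen (X.derived (fun _ : E => c)).Adj x y) :
    ∃ k : ℤ, X.WalkW x.1 y.1 k ∧ y.2 = x.2 + k • c := by
  induction h with
  | rel x y h =>
      obtain ⟨q, hs, ht⟩ := h
      have hs1 : X.s q.1 = x.1 := congrArg Prod.fst hs
      have hs2 : q.2 = x.2 := congrArg Prod.snd hs
      have ht1 : X.t q.1 = y.1 := congrArg Prod.fst ht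
      have ht2 : q.2 + c = y.2 := congrArg Prod.snd ht
      refine ⟨0 + 1, WalkW.fwd q.1 (WalkW.nil x.1) hs1 ht1, ?_⟩
      rw [← ht2, ← hs2]; simp
  | refl x => exact ⟨0, WalkW.nil x.1, by simp⟩
  | symm x y _ ih =>
      obtain ⟨k, hk, he⟩ := ih
      exact ⟨-k, walkW_symm X hk, by rw [he, neg_smul]; abel⟩
  | trans x y z _ _ ih1 ih2 =>
      obtain ⟨k, hk, he⟩ := ih1; obtain ⟨l, hl, he'⟩ := ih2
      exact ⟨k + l, walkW_trans X hk hl, by rw [he', he, add_smul]; abel⟩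

end Aux

/-- Let `X` be a finite connected directed multigraph and `a ∈ ℤ_p^×` a `p`-adic unit. The
derived graphs `X(ℤ/pⁿℤ, αₙ)` of the constant voltage assignments `αₙ` with value `a mod pⁿ`
are connected for all `n ≥ 1` iff `X` admits a closed walk whose weight is coprime to `p`. -/
theorem derived_connected_iff_exists_closed_walk {p : ℕ} [Fact p.Prime] {V E : Type*}
    [Fintype V] [Fintype E] [Nonempty V] (X : DirMultigraph V E) (hX : X.Connected)
    (a : ℤ_[p]) (ha : IsUnit a) :
    (∀ n : ℕ, 1 ≤ n → (X.derived (fun _ : E => PadicInt.toZModPow n a)).Connected) ↔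
      ∃ (v : V) (k : ℤ), X.WalkW v v k ∧ ¬ ((p : ℤ) ∣ k) := by
  have hp : p.Prime := Fact.out
  constructor
  · intro h
    obtain ⟨v⟩ := (inferInstance : Nonempty V)
    haveI : Fact (1 < p ^ 1) := ⟨by simpa using hp.one_lt⟩
    obtain ⟨k, hk, he⟩ := Aux.eqvGen_derived_proj X (PadicInt.toZModPow 1 a)
      (v, (0 : ZMod (p ^ 1))) (v, 1) (h 1 le_rfl _ _)
    refine ⟨v, k, hk, fun hdvd => ?_⟩
    have hz : ((k : ZMod (p ^ 1))) = 0 := by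
      rw [ZMod.intCast_zmod_eq_zero_iff_dvd]
      push_cast
      simpa using hdvd
    rw [zsmul_eq_mul, hz, zero_mul, add_zero] at he
    exact one_ne_zero he
  · rintro ⟨v, k, hk, hcop⟩ n hn
    haveI : NeZero (p ^ n) := ⟨pow_ne_zero n hp.ne_zero⟩
    rintro ⟨u, σ⟩ ⟨w, τ⟩
    set c := PadicInt.toZModPow n a with hc
    obtain ⟨m₁, hm₁⟩ := Aux.walkW_of_eqvGen X (hX u v)
    obtain ⟨m₂, hm₂⟩ := Aux.walkW_of_eqvGen X (hX v w)
    have hcu : IsUnit c := ha.map _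
    -- k is a unit mod p^n
    have hco : IsCoprime (k : ℤ) ((p : ℤ) ^ n) := by
      apply IsCoprime.pow_right
      rw [Int.isCoprime_iff_gcd_eq_one]
      have hnd : ¬ p ∣ k.natAbs := fun hd => hcop (Int.dvd_natAbs.mp (Int.natCast_dvd_natCast.mpr hd))
      simpa [Int.gcd] using (Nat.Coprime.symm ((Nat.Prime.coprime_iff_not_dvd hp).mpr hnd))
    have hku : IsUnit ((k : ZMod (p ^ n))) := by
      obtain ⟨A, B, hAB⟩ := hco
      have := congrArg (Int.cast : ℤ → ZMod (p ^ n)) hAB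
      push_cast at this
      rw [show ((p : ZMod (p ^ n)) ^ n) = ((p ^ n : ℕ) : ZMod (p ^ n)) by push_cast; ring,
        ZMod.natCast_self, mul_zero, add_zero] at this
      exact IsUnit.of_mul_eq_one _ (mul_comm (A : ZMod (p ^ n)) _ ▸ this)
    obtain ⟨x0, hx0⟩ := hku.mul hcu
    set t : ZMod (p ^ n) := τ - σ - ((m₁ + m₂ : ℤ) : ZMod (p ^ n)) * c with ht
    set j : ℤ := (((x0⁻¹ : (ZMod (p ^ n))ˣ) * t : ZMod (p ^ n)).val : ℤ) with hj
    have hjc : ((j : ZMod (p ^ n))) = (x0⁻¹ : (ZMod (p ^ n))ˣ) * t := by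
      rw [hj]; push_cast [ZMod.natCast_val, ZMod.cast_id]; rfl
    have key : (j : ZMod (p ^ n)) * ((k : ZMod (p ^ n)) * c) = t := by
      rw [hjc, ← hx0]
      calc ((x0⁻¹ : (ZMod (p ^ n))ˣ) : ZMod (p ^ n)) * t * (x0 : ZMod (p ^ n))
          = t * (((x0⁻¹ : (ZMod (p ^ n))ˣ) : ZMod (p ^ n)) * (x0 : ZMod (p ^ n))) := by ring
        _ = t := by rw [← Units.val_mul, inv_mul_cancel, Units.val_one, mul_one]
    have hwalk := Aux.walkW_trans X (Aux.walkW_trans X hm₁ (Aux.walkW_mul X hk j)) hm₂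
    have hder := Aux.walkW_derived X c hwalk σ
    have hcoord : σ + (m₁ + j * k + m₂) • c = τ := by
      rw [ht] at key
      rw [zsmul_eq_mul]
      push_cast
      push_cast at key
      linear_combination key
    rw [hcoord] at hder
    exact Aux.eqvGen_of_walkW _ hder
end

section
/- Let p be a prime, X = (V, E, s, t) a finite connected directed multigraph with V nonempty, and a ∈ ℤ_p. Then the derived graphs X(ℤ/p^nℤ, α_n), where α_n is the constant voltage assignment with value a mod p^n, are connected for all n ≥ 1 if and only if a is a p-adic unit and X admits a closed walk whose weight is coprime to p. -/
theorem DirMultigraph.WalkW.cast' {V E : Type*} {X : DirMultigraph V E} {u v : V} {k l : ℤ}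
    (h : X.WalkW u v k) (hkl : k = l) : X.WalkW u v l := hkl ▸ h

namespace DirMultigraph
variable {V E : Type*} {X : DirMultigraph V E}

theorem WalkW.append {u v w : V} {k l : ℤ} (h1 : X.WalkW u v k) (h2 : X.WalkW v w l) :
    X.WalkW u w (k + l) := by
  induction h2 with
  | nil => simpa using h1
  | fwd e h hs ht ih => exact (WalkW.fwd e ih hs ht).cast' (by ring)
  | bwd e h ht hs ih => exact (WalkW.bwd e ih ht hs).cast' (by ring)

theorem WalkW.reverse {u v : V} {k : ℤ} (h : X.WalkW u v k) : X.WalkW v u (-k) := by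
  induction h with
  | nil => exact (WalkW.nil _).cast' (by ring)
  | fwd e h hs ht ih => exact ((WalkW.bwd e (WalkW.nil _) ht hs).append ih).cast' (by ring)
  | bwd e h ht hs ih => exact ((WalkW.fwd e (WalkW.nil _) hs ht).append ih).cast' (by ring)

theorem WalkW.loop {v : V} {k : ℤ} (h : X.WalkW v v k) (j : ℤ) : X.WalkW v v (j * k) := by
  have hnat : ∀ m : ℕ, X.WalkW v v (m * k) := by
    intro m
    induction m with
    | zero => exact (WalkW.nil _).cast' (by ring)
    | succ m ih => exact (ih.append h).cast' (by push_cast; ring)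
  rcases Int.natAbs_eq j with hj | hj
  · exact (hnat j.natAbs).cast' (by conv_rhs => rw [hj])
  · exact (hnat j.natAbs).reverse.cast' (by conv_rhs => rw [hj, neg_mul])

theorem exists_walkW_of_eqvGen {u w : V} (h : Relation.EqvGen X.Adj u w) :
    ∃ m : ℤ, X.WalkW u w m := by
  induction h with
  | rel x y hxy => obtain ⟨e, hs, ht⟩ := hxy; exact ⟨_, WalkW.fwd e (WalkW.nil _) hs ht⟩
  | refl x => exact ⟨_, WalkW.nil _⟩
  | symm x y _ ih => obtain ⟨m, hm⟩ := ih; exact ⟨_, hm.reverse⟩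
  | trans x y z _ _ ih1 ih2 =>
      obtain ⟨m1, hm1⟩ := ih1; obtain ⟨m2, hm2⟩ := ih2; exact ⟨_, hm1.append hm2⟩

theorem exists_walkW_of_eqvGen_derived {G : Type*} [AddCommGroup G] {c : G} {x y : V × G}
    (h : Relation.EqvGen (X.derived fun _ : E => c).Adj x y) :
    ∃ k : ℤ, X.WalkW x.1 y.1 k ∧ y.2 = x.2 + k • c := by
  induction h with
  | rel x y hxy =>
      obtain ⟨⟨e, σ⟩, hs, ht⟩ := hxy
      subst hs; subst ht
      refine ⟨1, ?_, ?_⟩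
      · exact (WalkW.fwd e (WalkW.nil _) rfl rfl).cast' (by ring)
      · simp [derived]
  | refl x => exact ⟨0, WalkW.nil _, by simp⟩
  | symm x y hr ih =>
      obtain ⟨k, hw, he⟩ := ih
      exact ⟨-k, hw.reverse, by rw [he]; abel_nf; simp [neg_smul]⟩
  | trans x y z _ _ ih1 ih2 =>
      obtain ⟨k1, hw1, he1⟩ := ih1
      obtain ⟨k2, hw2, he2⟩ := ih2
      exact ⟨k1 + k2, hw1.append hw2, by rw [he2, he1, add_smul]; abel⟩

theorem eqvGen_derived_of_walkW {G : Type*} [AddCommGroup G] {c : G} {u w : V} {k : ℤ}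
    (h : X.WalkW u w k) (σ : G) :
    Relation.EqvGen (X.derived fun _ : E => c).Adj (u, σ) (w, σ + k • c) := by
  induction h with
  | nil => simpa using Relation.EqvGen.refl _
  | fwd e h hs ht ih =>
      rename_i v w k
      refine Relation.EqvGen.trans _ _ _ ih (Relation.EqvGen.rel _ _ ⟨(e, σ + k • c), ?_, ?_⟩)
      · simp [derived, hs]
      · simp [derived, ht, add_smul, add_assoc]
  | bwd e h ht hs ih =>
      rename_i v w k
      refine Relation.EqvGen.trans _ _ _ ih
        (Relation.EqvGen.symm _ _ (Relation.EqvGen.rel _ _ ⟨(e, σ + (k - 1) • c), ?_, ?_⟩))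
      · simp [derived, hs]
      · simp [derived, ht, sub_smul, add_assoc]

end DirMultigraph
/-- Let `X` be a finite connected directed multigraph and `a ∈ ℤ_p`. The derived graphs
`X(ℤ/pⁿℤ, αₙ)` of the constant voltage assignments `αₙ` with value `a mod pⁿ` are connected
for all `n ≥ 1` if and only if `a` is a `p`-adic unit and `X` admits a closed walk whose
weight is coprime to `p`. -/
theorem derived_connected_iff_isUnit_and_exists_closed_walk {p : ℕ} [Fact p.Prime] {V E : Type*}
    [Fintype V] [Fintype E] [Nonempty V] (X : DirMultigraph V E) (hX : X.Connected)
    (a : ℤ_[p]) :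
    (∀ n : ℕ, 1 ≤ n → (X.derived (fun _ : E => PadicInt.toZModPow n a)).Connected) ↔
      (IsUnit a ∧ ∃ (v : V) (k : ℤ), X.WalkW v v k ∧ ¬ ((p : ℤ) ∣ k)) := by
  constructor
  · intro hconn
    obtain ⟨v⟩ := ‹Nonempty V›
    haveI : Fact (1 < p ^ 1) := ⟨by simpa using (Fact.out : p.Prime).one_lt⟩
    obtain ⟨k, hw, he⟩ := DirMultigraph.exists_walkW_of_eqvGen_derived
      (hconn 1 le_rfl (v, (0 : ZMod (p ^ 1))) (v, (1 : ZMod (p ^ 1))))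
    have hc : (1 : ZMod (p ^ 1)) = (k : ZMod (p ^ 1)) * PadicInt.toZModPow 1 a := by
      simpa [zsmul_eq_mul] using he
    have hcu : PadicInt.toZModPow 1 a ≠ 0 := by
      intro h0; rw [h0, mul_zero] at hc; exact one_ne_zero hc
    have hunit : IsUnit a := by
      rw [PadicInt.isUnit_iff]
      by_contra hna
      have hlt : ‖a‖ < 1 := lt_of_le_of_ne a.norm_le_one hna
      have hmem : a ∈ RingHom.ker (PadicInt.toZModPow (p := p) 1) := by
        rw [PadicInt.ker_toZModPow, Ideal.mem_span_singleton, pow_one]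
        exact (PadicInt.norm_lt_one_iff_dvd a).1 hlt
      exact hcu (by simpa using hmem)
    refine ⟨hunit, v, k, hw, fun hdvd => ?_⟩
    have hk0 : (k : ZMod (p ^ 1)) = 0 := by
      rw [ZMod.intCast_zmod_eq_zero_iff_dvd]
      exact dvd_trans (by simp) hdvd
    rw [hk0, zero_mul] at hc
    exact one_ne_zero hc
  · rintro ⟨hunit, v₀, k, hw, hk⟩ n hn
    rintro ⟨u, σ⟩ ⟨w, τ⟩
    set c := PadicInt.toZModPow n a with hcdef
    have hcu : IsUnit c := hunit.map _
    have hku : IsUnit ((k : ℤ) : ZMod (p ^ n)) := by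
      have hpk : ¬ p ∣ k.natAbs := by
        intro hdvd
        exact hk (Int.natAbs_dvd_natAbs.mp (by simpa using hdvd))
      have hcop : (k.natAbs).Coprime (p ^ n) :=
        Nat.Coprime.pow_right n (((Fact.out : p.Prime).coprime_iff_not_dvd.2 hpk).symm)
      have habs : IsUnit ((k.natAbs : ℕ) : ZMod (p ^ n)) :=
        (ZMod.isUnit_iff_coprime _ _).2 hcop
      rcases Int.natAbs_eq k with hke | hke
      · rw [hke, Int.cast_natCast]; exact habs
      · rw [hke, Int.cast_neg, Int.cast_natCast]; exact habs.neg
    have hkcu : IsUnit ((k : ZMod (p ^ n)) * c) := hku.mul hcu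
    obtain ⟨m1, hm1⟩ := DirMultigraph.exists_walkW_of_eqvGen (hX u v₀)
    obtain ⟨m2, hm2⟩ := DirMultigraph.exists_walkW_of_eqvGen (hX v₀ w)
    obtain ⟨j, hj⟩ := ZMod.intCast_surjective
      ((τ - σ - ((m1 : ZMod (p ^ n)) + (m2 : ZMod (p ^ n))) * c) * (↑hkcu.unit⁻¹ : ZMod (p ^ n)))
    have hwalk : X.WalkW u w (m1 + (j * k + m2)) := hm1.append ((hw.loop j).append hm2)
    have hinv : (↑hkcu.unit⁻¹ : ZMod (p ^ n)) * ((k : ZMod (p ^ n)) * c) = 1 :=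
      IsUnit.val_inv_mul hkcu
    have key : σ + (m1 + (j * k + m2)) • c = τ := by
      push_cast [zsmul_eq_mul]
      rw [hj]
      linear_combination (τ - σ - ((m1 : ZMod (p ^ n)) + (m2 : ZMod (p ^ n))) * c) * hinv
    have := DirMultigraph.eqvGen_derived_of_walkW (c := c) hwalk σ
    rwa [key] at this
end

section
/- Let p be a prime, X = (V, E, s, t) a finite connected directed multigraph, and m ≥ 1. Suppose that the weight of every closed walk of X is divisible by p^m. Then in the derived graph X(ℤ/p^mℤ, α), where α is the constant voltage assignment with value 1, any two vertices (v, σ) and (v, τ) lying in the same connected component satisfy σ = τ; consequently the projection map V × ℤ/p^mℤ → V, (v, σ) ↦ v, is injective on each connected component of X(ℤ/p^mℤ, α). -/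
theorem DirMultigraph.WalkW.append_s8 {V E : Type*} {X : DirMultigraph V E} {u v w : V}
    {k l : ℤ} (h1 : X.WalkW u v k) (h2 : X.WalkW v w l) : X.WalkW u w (k + l) := by
  induction h2 with
  | nil => simpa using h1
  | fwd e h hs ht ih => have := DirMultigraph.WalkW.fwd e ih hs ht; rwa [← add_assoc]
  | bwd e h ht hs ih => have := DirMultigraph.WalkW.bwd e ih ht hs; rwa [← add_sub_assoc]

theorem DirMultigraph.WalkW.symm {V E : Type*} {X : DirMultigraph V E} {u v : V}
    {k : ℤ} (h : X.WalkW u v k) : X.WalkW v u (-k) := by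
  induction h with
  | nil => exact DirMultigraph.WalkW.nil _
  | fwd e h hs ht ih =>
    have step : X.WalkW _ _ (0 - 1) := DirMultigraph.WalkW.bwd e (DirMultigraph.WalkW.nil _) ht hs
    have := step.append_s8 ih
    convert this using 1; ring
  | bwd e h ht hs ih =>
    have step : X.WalkW _ _ (0 + 1) := DirMultigraph.WalkW.fwd e (DirMultigraph.WalkW.nil _) hs ht
    have := step.append_s8 ih
    convert this using 1; ring

theorem derived_walk {p : ℕ} {V E : Type*} (X : DirMultigraph V E) (m : ℕ)
    {a b : V × ZMod (p ^ m)}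
    (h : Relation.EqvGen (X.derived (fun _ : E => (1 : ZMod (p ^ m)))).Adj a b) :
    ∃ k : ℤ, X.WalkW a.1 b.1 k ∧ b.2 = a.2 + (k : ZMod (p ^ m)) := by
  induction h with
  | rel x y hxy =>
    obtain ⟨⟨e, σ⟩, hs, ht⟩ := hxy
    refine ⟨1, ?_, ?_⟩
    · have hs1 : X.s e = x.1 := congrArg Prod.fst hs
      have ht1 : X.t e = y.1 := congrArg Prod.fst ht
      have : X.WalkW x.1 y.1 (0 + 1) :=
        DirMultigraph.WalkW.fwd e (DirMultigraph.WalkW.nil _) hs1 ht1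
      simpa using this
    · have h2 : y.2 = σ + 1 := congrArg Prod.snd ht.symm
      have h2' : x.2 = σ := congrArg Prod.snd hs.symm
      rw [h2, h2']; simp
  | refl x => exact ⟨0, DirMultigraph.WalkW.nil _, by simp⟩
  | symm x y _ ih =>
    obtain ⟨k, hw, hσ⟩ := ih
    exact ⟨-k, hw.symm, by rw [hσ]; push_cast; ring⟩
  | trans x y z _ _ ih1 ih2 =>
    obtain ⟨k, hw, hσ⟩ := ih1
    obtain ⟨l, hw', hσ'⟩ := ih2
    exact ⟨k + l, hw.append_s8 hw', by rw [hσ', hσ]; push_cast; ring⟩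

/-- Let `X` be a finite connected directed multigraph such that the weight of every closed
walk of `X` is divisible by `p^m`. Then in the derived graph `X(ℤ/pᵐℤ, α)` of the constant
voltage assignment with value `1`, two vertices `(v, σ)` and `(v, τ)` in the same connected
component satisfy `σ = τ`; consequently the projection `(v, σ) ↦ v` is injective on each
connected component. -/
theorem derived_component_section {p : ℕ} [Fact p.Prime] {V E : Type*}
    [Fintype V] [Fintype E] [Nonempty V] (X : DirMultigraph V E) (hX : X.Connected)
    (m : ℕ) (hm : 1 ≤ m)
    (hdiv : ∀ (v : V) (k : ℤ), X.WalkW v v k → ((p : ℤ) ^ m ∣ k)) :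
    (∀ (v : V) (σ τ : ZMod (p ^ m)),
      Relation.EqvGen (X.derived (fun _ : E => (1 : ZMod (p ^ m)))).Adj (v, σ) (v, τ) →
        σ = τ) ∧
    (∀ a b : V × ZMod (p ^ m),
      Relation.EqvGen (X.derived (fun _ : E => (1 : ZMod (p ^ m)))).Adj a b →
        a.1 = b.1 → a = b) := by
  have main : ∀ (v : V) (σ τ : ZMod (p ^ m)),
      Relation.EqvGen (X.derived (fun _ : E => (1 : ZMod (p ^ m)))).Adj (v, σ) (v, τ) →
        σ = τ := by
    intro v σ τ h
    obtain ⟨k, hw, hσ⟩ := derived_walk X m h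
    obtain ⟨c, hc⟩ := hdiv v k hw
    have : (k : ZMod (p ^ m)) = 0 := by
      have h0 : ((p : ZMod (p ^ m))) ^ m = 0 := by
        have := ZMod.natCast_self (p ^ m); push_cast at this; exact this
      rw [hc]; push_cast; rw [h0, zero_mul]
    rw [this, add_zero] at hσ
    exact hσ.symm
  refine ⟨main, ?_⟩
  rintro ⟨a1, a2⟩ ⟨b1, b2⟩ h h1
  simp only at h1
  subst h1
  exact Prod.ext rfl (main _ _ _ h)
end

section
/- Let p be a prime, n ≥ 1, and A an n×n matrix with natural number entries such that p divides Σ_j A_{ij} and p divides Σ_j A_{ji} for every index i (i.e., p divides the out-degree and the in-degree of every vertex of the associated directed multigraph). Let D be the diagonal matrix with D_{ii} = (Σ_j A_{ji}) + (Σ_j A_{ij}) and M(T) = det(D − (1+T)·A − (1+T)^{−1}·Aᵀ) ∈ ℤ_p[[T]]. Then every coefficient of M(T) is divisible by p, i.e., M(T) ∈ p·ℤ_p[[T]]. -/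
open PowerSeries

/-- The power series `M(T) = det(D − (1+T)·A − (1+T)⁻¹·Aᵀ)` attached to a directed multigraph
with adjacency matrix `A`, where `D` is the diagonal matrix of total degrees and `S` denotes
the inverse of `1 + T` in `ℤ_p[[T]]`. -/
noncomputable def Mser (p : ℕ) [Fact p.Prime] {n : ℕ} (A : Matrix (Fin n) (Fin n) ℕ)
    (S : PowerSeries ℤ_[p]) : PowerSeries ℤ_[p] :=
  (Matrix.of fun i j =>
      Matrix.diagonal (fun i => (((∑ j, A i j) + (∑ j, A j i) : ℕ) : PowerSeries ℤ_[p])) i j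
        - (1 + PowerSeries.X) * ((A i j : ℕ) : PowerSeries ℤ_[p])
        - S * ((A j i : ℕ) : PowerSeries ℤ_[p])).det

set_option synthInstance.maxHeartbeats 1000000 in
set_option maxHeartbeats 1000000 in
/-- If `p` divides the out-degree `∑_j A_{ij}` and the in-degree `∑_j A_{ji}` of every vertex,
then every coefficient of `M(T) = det(D − (1+T)A − (1+T)⁻¹Aᵀ)` is divisible by `p`,
i.e. `M(T) ∈ p·ℤ_p[[T]]`. -/
theorem Mser_dvd_of_p_dvd_degrees (p : ℕ) [Fact p.Prime] (n : ℕ) (hn : 1 ≤ n)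
    (A : Matrix (Fin n) (Fin n) ℕ)
    (hout : ∀ i, p ∣ ∑ j, A i j) (hin : ∀ i, p ∣ ∑ j, A j i)
    (S : PowerSeries ℤ_[p]) (hS : S * (1 + PowerSeries.X) = 1) :
    (∀ i : ℕ, (p : ℤ_[p]) ∣ PowerSeries.coeff i (Mser p A S)) ∧
      PowerSeries.C (p : ℤ_[p]) ∣ Mser p A S := by
  set N : Matrix (Fin n) (Fin n) (PowerSeries ℤ_[p]) := Matrix.of fun i j =>
      Matrix.diagonal (fun i => (((∑ j, A i j) + (∑ j, A j i) : ℕ) : PowerSeries ℤ_[p])) i j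
        - (1 + PowerSeries.X) * ((A i j : ℕ) : PowerSeries ℤ_[p])
        - S * ((A j i : ℕ) : PowerSeries ℤ_[p]) with hN
  have hpc : (PowerSeries.C (p : ℤ_[p])) = ((p : ℕ) : PowerSeries ℤ_[p]) := by simp
  -- each row sum is divisible by p
  have hrow : ∀ i, (PowerSeries.C (p : ℤ_[p])) ∣ ∑ j, N i j := by
    intro i
    have hsum : ∑ j, N i j = (((∑ j, A i j) + (∑ j, A j i) : ℕ) : PowerSeries ℤ_[p])
        - (1 + PowerSeries.X) * ((∑ j, A i j : ℕ) : PowerSeries ℤ_[p])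
        - S * ((∑ j, A j i : ℕ) : PowerSeries ℤ_[p]) := by
      simp only [hN, Matrix.of_apply, Matrix.diagonal_apply]
      rw [Finset.sum_sub_distrib, Finset.sum_sub_distrib]
      congr 1
      · congr 1
        · simp
        · rw [← Finset.mul_sum]
          push_cast
          ring
      · rw [← Finset.mul_sum]
        push_cast
        ring
    rw [hsum, hpc]
    have h1 : ((p : ℕ) : PowerSeries ℤ_[p]) ∣ ((∑ j, A i j : ℕ) : PowerSeries ℤ_[p]) :=
      Nat.cast_dvd_cast (hout i)
    have h2 : ((p : ℕ) : PowerSeries ℤ_[p]) ∣ ((∑ j, A j i : ℕ) : PowerSeries ℤ_[p]) :=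
      Nat.cast_dvd_cast (hin i)
    exact dvd_sub (dvd_sub (Nat.cast_dvd_cast ((hout i).add (hin i)))
      (h1.mul_left _)) (h2.mul_left _)
  -- express det as a combination of row sums via the adjugate
  have key : PowerSeries.C (p : ℤ_[p]) ∣ Mser p A S := by
    have h : N.adjugate.mulVec (N.mulVec (fun _ => 1)) =
        (fun _ => N.det : Fin n → PowerSeries ℤ_[p]) := by
      rw [Matrix.mulVec_mulVec, Matrix.adjugate_mul, Matrix.smul_mulVec,
        Matrix.one_mulVec]
      funext i
      simp
    have h0 := congrFun h ⟨0, hn⟩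
    have : PowerSeries.C (p : ℤ_[p]) ∣ N.adjugate.mulVec (N.mulVec (fun _ => 1)) ⟨0, hn⟩ := by
      simp only [Matrix.mulVec, dotProduct, mul_one]
      exact Finset.dvd_sum fun j _ => Dvd.dvd.mul_left (hrow j) _
    rw [h0] at this
    exact this
  refine ⟨?_, key⟩
  intro i
  obtain ⟨g, hg⟩ := key
  rw [hg, PowerSeries.coeff_C_mul]
  exact dvd_mul_right _ _
end

section
/- Let p be a prime, n ≥ 1, and A an n×n matrix with natural number entries that is balanced: for every index i, d_i := Σ_j A_{ij} = Σ_j A_{ji}. Let D be the diagonal matrix with D_{ii} = 2·d_i, let k = Σ_i d_i, let L = D − A − Aᵀ be the Laplacian matrix, and let κ be the determinant of the matrix obtained from L by deleting its first row and first column (with κ = 1 when n = 1). Let M(T) = det(D − (1+T)·A − (1+T)^{−1}·Aᵀ) ∈ ℤ_p[[T]]. Then the coefficients of T⁰ and T¹ of M(T) are zero, and the coefficient of T² of M(T) equals −k·κ. In particular T² divides M(T) in ℤ_p[[T]]. -/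
open PowerSeries

/-- The Laplacian matrix `L = D − A − Aᵀ` over `ℤ` of a balanced directed multigraph,
where `D` is the diagonal matrix with entries `2·d_i = ∑_j A_{ij} + ∑_j A_{ji}`. -/
def Laplacian' {n : ℕ} (A : Matrix (Fin n) (Fin n) ℕ) : Matrix (Fin n) (Fin n) ℤ :=
  Matrix.of fun i j =>
    Matrix.diagonal (fun i => (2 * (∑ j, A i j) : ℤ)) i j - (A i j : ℤ) - (A j i : ℤ)

theorem int_det_lemma {n : ℕ} (A : Matrix (Fin (n + 1)) (Fin (n + 1)) ℕ)
    (hbal : ∀ i, (∑ j, A i j) = ∑ j, A j i)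
    (L : Matrix (Fin (n+1)) (Fin (n+1)) ℤ)
    (hL : ∀ i j, L i j = (if i = j then 2 * (∑ k, (A i k : ℤ)) else 0) - A i j - A j i) :
    (L.updateCol 0 (fun i => ((∑ j, A i j : ℕ) : ℤ))).det
      = ((∑ i, ∑ j, A i j : ℕ) : ℤ) * (L.submatrix Fin.succ Fin.succ).det := by
  set P := L.updateCol 0 (fun i => ((∑ j, A i j : ℕ) : ℤ)) with hP
  have hPapply : ∀ i j, P i j = if j = 0 then ((∑ k, A i k : ℕ) : ℤ) else L i j := by
    intro i j; rw [hP, Matrix.updateCol_apply]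
  have hcol : ∀ j, ∑ i, L i j = 0 := by
    intro j
    simp only [hL]
    rw [Finset.sum_sub_distrib, Finset.sum_sub_distrib, Finset.sum_ite_eq', if_pos (Finset.mem_univ j)]
    have h1 : ∑ i, (A i j : ℤ) = ∑ i, (A j i : ℤ) := by exact_mod_cast (hbal j).symm
    rw [h1]; ring
  have key : P.det = (P.updateRow 0 (fun j => ∑ i, P i j)).det := by
    have h := Matrix.det_updateRow_sum P 0 (fun _ => (1 : ℤ))
    simp only [one_smul, smul_eq_mul, one_mul] at h
    have hfun : (∑ x : Fin (n + 1), P x) = fun j => ∑ i, P i j := by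
      funext j
      exact Finset.sum_apply j Finset.univ fun k => P k
    rw [hfun] at h
    exact h.symm
  have hrow0 : ∀ j : Fin (n+1), (∑ i, P i j)
      = if j = 0 then ((∑ i, ∑ k, A i k : ℕ) : ℤ) else 0 := by
    intro j
    by_cases h : j = 0
    · subst h
      simp only [if_pos rfl]
      push_cast
      refine Finset.sum_congr rfl fun i _ => ?_
      rw [hPapply, if_pos rfl]; push_cast; ring
    · rw [if_neg h]
      calc ∑ i, P i j = ∑ i, L i j := by
            refine Finset.sum_congr rfl fun i _ => ?_
            rw [hPapply, if_neg h]
        _ = 0 := hcol j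
  rw [key, Matrix.det_succ_row_zero]
  rw [Finset.sum_eq_single 0]
  · rw [Matrix.updateRow_self, hrow0, if_pos rfl]
    simp only [Fin.val_zero, pow_zero, one_mul]
    have hsub : (P.updateRow 0 fun j => ∑ i, P i j).submatrix Fin.succ (Fin.succAbove 0)
        = L.submatrix Fin.succ Fin.succ := by
      ext i j
      simp only [Matrix.submatrix_apply, Fin.zero_succAbove]
      rw [Matrix.updateRow_ne (Fin.succ_ne_zero i), hPapply, if_neg (Fin.succ_ne_zero j)]
    rw [hsub]
  · intro j _ hj
    rw [Matrix.updateRow_self, hrow0, if_neg hj]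
    ring
  · intro h; exact absurd (Finset.mem_univ _) h

/-- For a balanced directed multigraph (`∑_j A_{ij} = ∑_j A_{ji}` for every `i`),
the coefficients of `T⁰` and `T¹` of `M(T) = det(D − (1+T)A − (1+T)⁻¹Aᵀ)` vanish, and the
coefficient of `T²` equals `−k·κ`, where `k` is the total degree `∑_i d_i` and `κ` is the
determinant of the Laplacian with first row and column deleted (the number of spanning trees of
the underlying undirected multigraph, by Kirchhoff's formula). In particular `T² ∣ M(T)`. -/
theorem Mser_coeff_balanced (p : ℕ) [Fact p.Prime] (n : ℕ)
    (A : Matrix (Fin (n + 1)) (Fin (n + 1)) ℕ)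
    (hbal : ∀ i, (∑ j, A i j) = ∑ j, A j i)
    (S : PowerSeries ℤ_[p]) (hS : S * (1 + PowerSeries.X) = 1) :
    PowerSeries.coeff 0 (Mser p A S) = 0 ∧
    PowerSeries.coeff 1 (Mser p A S) = 0 ∧
    PowerSeries.coeff 2 (Mser p A S) =
      -((((∑ i, ∑ j, A i j : ℕ) : ℤ) * ((Laplacian' A).submatrix Fin.succ Fin.succ).det : ℤ)
        : ℤ_[p]) ∧
    PowerSeries.X ^ 2 ∣ Mser p A S := by
  set N : Matrix (Fin (n+1)) (Fin (n+1)) (PowerSeries ℤ_[p]) := Matrix.of fun i j =>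
      Matrix.diagonal (fun i => (((∑ j, A i j) + (∑ j, A j i) : ℕ) : PowerSeries ℤ_[p])) i j
        - (1 + PowerSeries.X) * ((A i j : ℕ) : PowerSeries ℤ_[p])
        - S * ((A j i : ℕ) : PowerSeries ℤ_[p]) with hNdef
  have hMser : Mser p A S = N.det := rfl
  -- row sums
  have hrowsum : ∀ i, (∑ j, N i j) = -(S * X ^ 2) * ((∑ j, A i j : ℕ) : PowerSeries ℤ_[p]) := by
    intro i
    have hsum : ∑ j, N i j
        = (((∑ j, A i j) + (∑ j, A j i) : ℕ) : PowerSeries ℤ_[p])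
          - (1 + X) * ((∑ j, A i j : ℕ) : PowerSeries ℤ_[p]) - S * ((∑ j, A j i : ℕ) : PowerSeries ℤ_[p]) := by
      simp only [hNdef, Matrix.of_apply, Finset.sum_sub_distrib]
      congr 1
      · congr 1
        · simp [Matrix.diagonal_apply, Finset.sum_ite_eq]
        · rw [← Finset.mul_sum]
          push_cast
          ring
      · rw [← Finset.mul_sum]
        push_cast
        ring
    rw [hsum, ← hbal i, Nat.cast_add]
    linear_combination ((∑ j, A i j : ℕ) : PowerSeries ℤ_[p]) * (X - 1) * hS
  -- factor out -(S X²) from column 0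
  have h1 : N.det = (N.updateCol 0 fun k => ∑ j, N k j).det := by
    have h := Matrix.det_updateCol_sum N 0 (fun _ => (1 : PowerSeries ℤ_[p]))
    simp only [one_smul, smul_eq_mul, one_mul] at h
    exact h.symm
  have hcolfun : (fun k => ∑ j, N k j)
      = (-(S * X ^ 2)) • (fun i => ((∑ j, A i j : ℕ) : PowerSeries ℤ_[p])) := by
    funext i
    rw [hrowsum i]
    rfl
  have hdet : N.det = -(S * X ^ 2) * (N.updateCol 0 fun i => ((∑ j, A i j : ℕ) : PowerSeries ℤ_[p])).det := by
    rw [h1, hcolfun, Matrix.det_updateCol_smul]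
  set C : PowerSeries ℤ_[p] := (N.updateCol 0 fun i => ((∑ j, A i j : ℕ) : PowerSeries ℤ_[p])).det with hC
  have hfac : Mser p A S = (-(S * C)) * X ^ 2 := by
    rw [hMser, hdet]; ring
  have hdvd : (X : PowerSeries ℤ_[p]) ^ 2 ∣ Mser p A S := ⟨-(S * C), by rw [hfac]; ring⟩
  have hlow := (PowerSeries.X_pow_dvd_iff).mp hdvd
  refine ⟨hlow 0 (by norm_num), hlow 1 (by norm_num), ?_, hdvd⟩
  -- coefficient of T²
  have hc2 : PowerSeries.coeff 2 (Mser p A S) = PowerSeries.coeff 0 (-(S * C)) := by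
    rw [hfac]
    exact PowerSeries.coeff_mul_X_pow (-(S * C)) 2 0
  rw [hc2]
  -- constant coefficients
  have hS0 : (constantCoeff (R := ℤ_[p])) S = 1 := by
    have := congrArg ((constantCoeff (R := ℤ_[p]))) hS
    simpa using this
  -- constant coeff of C via the integer determinant
  have hCmap : (N.updateCol 0 fun i => ((∑ j, A i j : ℕ) : PowerSeries ℤ_[p])).map ((constantCoeff (R := ℤ_[p])))
      = ((Laplacian' A).updateCol 0 (fun i => ((∑ j, A i j : ℕ) : ℤ))).map
          (Int.castRingHom ℤ_[p]) := by
    ext i j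
    simp only [Matrix.map_apply, Matrix.updateCol_apply]
    by_cases h : j = 0
    · subst h
      simp only [if_pos rfl]
      simp
    · rw [if_neg h, if_neg h]
      simp only [hNdef, Matrix.of_apply, Laplacian', Matrix.diagonal_apply, apply_ite,
        map_sub, map_mul, map_add, map_one, map_natCast, constantCoeff_X, hS0,
        map_zero]
      by_cases hij : i = j
      · rw [if_pos hij, if_pos hij, ← hbal i]
        push_cast
        norm_num [two_mul]
      · rw [if_neg hij, if_neg hij]
        norm_num
  have hC0 : (constantCoeff (R := ℤ_[p])) C
      = ((((∑ i, ∑ j, A i j : ℕ) : ℤ)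
          * ((Laplacian' A).submatrix Fin.succ Fin.succ).det : ℤ) : ℤ_[p]) := by
    have hLfact : ∀ i j, Laplacian' A i j
        = (if i = j then 2 * (∑ k, (A i k : ℤ)) else 0) - A i j - A j i := by
      intro i j
      simp only [Laplacian', Matrix.of_apply, Matrix.diagonal_apply, apply_ite]
      push_cast
      ring_nf
    rw [hC, RingHom.map_det, RingHom.mapMatrix_apply, hCmap, ← RingHom.mapMatrix_apply,
      ← RingHom.map_det, int_det_lemma A hbal (Laplacian' A) hLfact]
    simp
  rw [coeff_zero_eq_constantCoeff, map_neg, map_mul, hS0, one_mul, hC0]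
end

section
/- Let p be a prime, n ≥ 1, and A an n×n matrix with natural number entries that is balanced: for every index i, d_i := Σ_j A_{ij} = Σ_j A_{ji}. Let D be the diagonal matrix with D_{ii} = 2·d_i, let k = Σ_i d_i, let L = D − A − Aᵀ, and let κ be the determinant of the matrix obtained from L by deleting its first row and first column (with κ = 1 when n = 1). Suppose p does not divide k·κ. Let M(T) = det(D − (1+T)·A − (1+T)^{−1}·Aᵀ) ∈ ℤ_p[[T]]. Then there exists a unit u(T) of ℤ_p[[T]] such that M(T) = T²·u(T). In particular M(T) is not divisible by p and its T-adic order is exactly 2. -/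
open PowerSeries
open scoped Matrix

/-- The Laplacian matrix `L = D − A − Aᵀ` over `ℤ` of a balanced directed multigraph,
where `D` is the diagonal matrix with entries `2·d_i = ∑_j A_{ij} + ∑_j A_{ji}`. -/
def LaplacianMat {n : ℕ} (A : Matrix (Fin n) (Fin n) ℕ) : Matrix (Fin n) (Fin n) ℤ :=
  Matrix.of fun i j =>
    Matrix.diagonal (fun i => (2 * (∑ j, A i j) : ℤ)) i j - (A i j : ℤ) - (A j i : ℤ)

/-- For a balanced directed multigraph (`∑_j A_{ij} = ∑_j A_{ji}` for every `i`), if `p` does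
not divide `k·κ`, where `k = ∑_i d_i` is the total degree and `κ` is the determinant of the
Laplacian with first row and column deleted, then `M(T) = det(D − (1+T)A − (1+T)⁻¹Aᵀ)` factors
as `T²·u(T)` for a unit `u(T)` of `ℤ_p[[T]]`: the associated constant `ℤ_p`-tower has `μ = 0`
and `λ = 1`. -/
theorem Mser_eq_Xsq_mul_unit (p : ℕ) [Fact p.Prime] (n : ℕ)
    (A : Matrix (Fin (n + 1)) (Fin (n + 1)) ℕ)
    (hbal : ∀ i, (∑ j, A i j) = ∑ j, A j i)
    (hreg : ¬ ((p : ℤ) ∣ ((∑ i, ∑ j, A i j : ℕ) : ℤ) *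
      ((LaplacianMat A).submatrix Fin.succ Fin.succ).det))
    (S : PowerSeries ℤ_[p]) (hS : S * (1 + PowerSeries.X) = 1) :
    ∃ u : (PowerSeries ℤ_[p])ˣ, Mser p A S = PowerSeries.X ^ 2 * (u : PowerSeries ℤ_[p]) := by
  classical
  set d : Fin (n+1) → ℕ := fun i => ∑ j, A i j with hd
  set B : Matrix (Fin (n+1)) (Fin (n+1)) ℤ_[p]⟦X⟧ := Matrix.of fun i j =>
      Matrix.diagonal (fun i => (((∑ j, A i j) + (∑ j, A j i) : ℕ) : PowerSeries ℤ_[p])) i j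
        - (1 + PowerSeries.X) * ((A i j : ℕ) : PowerSeries ℤ_[p])
        - S * ((A j i : ℕ) : PowerSeries ℤ_[p]) with hB
  set c : ℤ_[p]⟦X⟧ := -(X^2 * S) with hc
  have hS1 : constantCoeff (R := ℤ_[p]) S = 1 := by
    have := congrArg (constantCoeff (R := ℤ_[p])) hS
    simpa using this
  have hbc : ∀ i, ∑ j, ((A i j : ℤ_[p]⟦X⟧)) = ∑ j, ((A j i : ℤ_[p]⟦X⟧)) := by
    intro i; exact_mod_cast congrArg (Nat.cast : ℕ → ℤ_[p]⟦X⟧) (hbal i)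
  have hdc : ∀ i, ∑ j, ((A i j : ℤ_[p]⟦X⟧)) = (d i : ℤ_[p]⟦X⟧) := by
    intro i; rw [hd]; push_cast; ring
  have e0 : ∀ i : Fin (n+1), (∑ j, Matrix.diagonal
      (fun i => (((∑ j, A i j) + (∑ j, A j i) : ℕ) : ℤ_[p]⟦X⟧)) i j)
      = ((d i : ℤ_[p]⟦X⟧) + (d i : ℤ_[p]⟦X⟧)) := by
    intro i
    rw [Finset.sum_eq_single_of_mem i (Finset.mem_univ i)
      (fun b _ hb => Matrix.diagonal_apply_ne' _ hb), Matrix.diagonal_apply_eq, ← hbal i]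
    push_cast [hd]; ring
  have e0' : ∀ j : Fin (n+1), (∑ i, Matrix.diagonal
      (fun i => (((∑ j, A i j) + (∑ j, A j i) : ℕ) : ℤ_[p]⟦X⟧)) i j)
      = ((d j : ℤ_[p]⟦X⟧) + (d j : ℤ_[p]⟦X⟧)) := by
    intro j
    rw [Finset.sum_eq_single_of_mem j (Finset.mem_univ j)
      (fun b _ hb => Matrix.diagonal_apply_ne _ hb), Matrix.diagonal_apply_eq, ← hbal j]
    push_cast [hd]; ring
  have hrow : ∀ i, ∑ j, B i j = c * (d i : ℤ_[p]⟦X⟧) := by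
    intro i
    rw [hB]
    simp only [Matrix.of_apply, Finset.sum_sub_distrib, ← Finset.mul_sum]
    rw [e0 i, hdc i, show (∑ j, ((A j i : ℕ) : ℤ_[p]⟦X⟧)) = (d i : ℤ_[p]⟦X⟧) from
      (hbc i).symm.trans (hdc i), hc]
    linear_combination (d i : ℤ_[p]⟦X⟧) * (X - 1) * hS
  have hcol : ∀ j, ∑ i, B i j = c * (d j : ℤ_[p]⟦X⟧) := by
    intro j
    rw [hB]
    simp only [Matrix.of_apply, Finset.sum_sub_distrib, ← Finset.mul_sum]
    rw [e0' j, hdc j, show (∑ i, ((A i j : ℕ) : ℤ_[p]⟦X⟧)) = (d j : ℤ_[p]⟦X⟧) from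
      (hbc j).symm.trans (hdc j), hc]
    linear_combination (d j : ℤ_[p]⟦X⟧) * (X - 1) * hS
  -- row/column reduction
  set P : Matrix (Fin (n+1)) (Fin (n+1)) ℤ_[p]⟦X⟧ :=
    Matrix.of fun i j => if i = 0 then 1 else if i = j then 1 else 0 with hP
  have hdetP : P.det = 1 := by
    rw [Matrix.det_of_upperTriangular]
    · simp [hP, Matrix.of_apply]
    · intro i j hij
      have h0 : i ≠ 0 := Fin.pos_iff_ne_zero.mp (lt_of_le_of_lt (Fin.zero_le j) hij)
      have h1 : i ≠ j := ne_of_gt hij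
      simp [hP, h0, h1]
  set C' : Matrix (Fin (n+1)) (Fin (n+1)) ℤ_[p]⟦X⟧ :=
    Matrix.of fun i j =>
      if i = 0 then (if j = 0 then ((∑ i, d i : ℕ) : ℤ_[p]⟦X⟧) else (d j : ℤ_[p]⟦X⟧))
      else (if j = 0 then c * (d i : ℤ_[p]⟦X⟧) else B i j) with hC'
  have h1 : ∀ i j, (P * B) i j = if i = 0 then ∑ k, B k j else B i j := by
    intro i j
    rw [Matrix.mul_apply]
    by_cases h : i = 0
    · subst h; simp [hP]
    · simp [hP, h]
  have h2 : ∀ i j, (P * B * Pᵀ) i j = if j = 0 then ∑ k, (P * B) i k else (P * B) i j := by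
    intro i j
    rw [Matrix.mul_apply]
    by_cases h : j = 0
    · subst h; simp [hP, Matrix.transpose_apply]
    · simp [hP, Matrix.transpose_apply, h, eq_comm]
  have hmul : P * B * Pᵀ = Matrix.updateRow C' 0 (c • C' 0) := by
    refine Matrix.ext fun i j => ?_
    rw [h2 i j]
    by_cases hi : i = 0
    · subst hi
      simp only [Matrix.updateRow_self, Pi.smul_apply, smul_eq_mul]
      by_cases hj : j = 0
      · subst hj
        rw [if_pos rfl]
        have e : ∀ k : Fin (n+1), (P * B) 0 k = c * (d k : ℤ_[p]⟦X⟧) := by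
          intro k; rw [h1]; simp [hcol k]
        rw [Finset.sum_congr rfl (fun k _ => e k), ← Finset.mul_sum]
        simp [hC', Nat.cast_sum]
      · rw [if_neg hj, h1, if_pos rfl, hcol j]
        simp [hC', hj]
    · rw [Matrix.updateRow_ne hi]
      by_cases hj : j = 0
      · subst hj
        rw [if_pos rfl]
        have e : ∑ k, (P * B) i k = ∑ k, B i k :=
          Finset.sum_congr rfl fun k _ => by rw [h1, if_neg hi]
        rw [e, hrow i]
        simp [hC', hi]
      · rw [if_neg hj, h1, if_neg hi]
        simp [hC', hi, hj]
  have hdetB : B.det = c * C'.det := by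
    have e : (P * B * Pᵀ).det = B.det := by
      rw [Matrix.det_mul, Matrix.det_mul, hdetP, Matrix.det_transpose, hdetP, one_mul, mul_one]
    rw [← e, hmul, Matrix.det_updateRow_smul, Matrix.updateRow_eq_self]
  -- constant coefficient of det C'
  set φ : ℤ_[p]⟦X⟧ →+* ℤ_[p] := constantCoeff (R := ℤ_[p]) with hφ
  set N : Matrix (Fin (n+1)) (Fin (n+1)) ℤ_[p] := C'.map φ with hN
  have hS1' : constantCoeff (R := ℤ_[p]) S = 1 := hS1
  have hdetN : φ C'.det = N.det := by
    have h := RingHom.map_det φ C'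
    rw [RingHom.mapMatrix_apply] at h
    rw [hN]; exact h
  have hφc : φ c = 0 := by
    rw [hc]
    simp [hφ]
  have hN0 : ∀ i : Fin (n+1), i ≠ 0 → N i 0 = 0 := by
    intro i hi
    rw [hN, Matrix.map_apply, hC']
    simp [Matrix.of_apply, hi, hφc]
  have hN00 : N 0 0 = ((∑ i, d i : ℕ) : ℤ_[p]) := by
    rw [hN, Matrix.map_apply, hC']
    simp [hφ]
  have hφB : ∀ i j : Fin (n+1), i ≠ j → φ (B i j) = - (A i j : ℤ_[p]) - (A j i : ℤ_[p]) := by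
    intro i j hij
    rw [hB]
    simp only [Matrix.of_apply, Matrix.diagonal_apply_ne _ hij]
    simp only [map_sub, map_mul, map_add, map_one, map_zero, map_natCast, hφ,
      constantCoeff_X, hS1']
    ring
  have hφB' : ∀ i : Fin (n+1), φ (B i i) =
      (((∑ k, A i k) + (∑ k, A k i) : ℕ) : ℤ_[p]) - (A i i : ℤ_[p]) - (A i i : ℤ_[p]) := by
    intro i
    rw [hB]
    simp only [Matrix.of_apply, Matrix.diagonal_apply_eq]
    simp only [map_sub, map_mul, map_add, map_one, map_zero, map_natCast, hφ,
      constantCoeff_X, hS1']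
    ring
  have hNsub : N.submatrix Fin.succ Fin.succ =
      ((LaplacianMat A).submatrix Fin.succ Fin.succ).map (Int.cast : ℤ → ℤ_[p]) := by
    refine Matrix.ext fun i j => ?_
    rw [Matrix.submatrix_apply, Matrix.map_apply, Matrix.submatrix_apply, hN,
      Matrix.map_apply, hC']
    simp only [Matrix.of_apply, if_neg (Fin.succ_ne_zero i), if_neg (Fin.succ_ne_zero j)]
    rw [LaplacianMat]
    by_cases h : i = j
    · subst h
      rw [hφB' i.succ]
      simp only [Matrix.of_apply, Matrix.diagonal_apply_eq]
      rw [← hbal i.succ]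
      push_cast
      ring
    · have h' : i.succ ≠ j.succ := fun hh => h (Fin.succ_injective _ hh)
      rw [hφB _ _ h']
      simp only [Matrix.of_apply, Matrix.diagonal_apply_ne _ h']
      push_cast
      ring
  have hmap : (((LaplacianMat A).submatrix Fin.succ Fin.succ).map (Int.cast : ℤ → ℤ_[p])).det
      = ((((LaplacianMat A).submatrix Fin.succ Fin.succ).det : ℤ) : ℤ_[p]) := by
    have h := RingHom.map_det (Int.castRingHom ℤ_[p]) ((LaplacianMat A).submatrix Fin.succ Fin.succ)
    rw [RingHom.mapMatrix_apply] at h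
    simpa using h.symm
  have hdetN2 : N.det = ((∑ i, d i : ℕ) : ℤ_[p]) *
      ((((LaplacianMat A).submatrix Fin.succ Fin.succ).det : ℤ) : ℤ_[p]) := by
    rw [Matrix.det_succ_column_zero]
    rw [Finset.sum_eq_single_of_mem 0 (Finset.mem_univ 0)
      (fun b _ hb => by rw [hN0 b hb]; ring)]
    rw [hN00, Fin.succAbove_zero, hNsub, hmap]
    simp
  -- the unit
  set w : ℤ_[p]⟦X⟧ := -(S * C'.det) with hw
  have hφw : φ w = -(((∑ i, d i : ℕ) : ℤ_[p]) *
      ((((LaplacianMat A).submatrix Fin.succ Fin.succ).det : ℤ) : ℤ_[p])) := by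
    rw [hw, map_neg, map_mul, hS1, one_mul, hdetN, hdetN2]
  have hkk : ((((∑ i, ∑ j, A i j : ℕ) : ℤ) *
      ((LaplacianMat A).submatrix Fin.succ Fin.succ).det : ℤ) : ℤ_[p]) =
      ((∑ i, d i : ℕ) : ℤ_[p]) *
      ((((LaplacianMat A).submatrix Fin.succ Fin.succ).det : ℤ) : ℤ_[p]) := by
    push_cast [hd]
    ring
  have hunit0 : IsUnit (((((∑ i, ∑ j, A i j : ℕ) : ℤ) *
      ((LaplacianMat A).submatrix Fin.succ Fin.succ).det : ℤ) : ℤ_[p])) := by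
    rw [PadicInt.isUnit_iff]
    have hle : ‖((((∑ i, ∑ j, A i j : ℕ) : ℤ) *
        ((LaplacianMat A).submatrix Fin.succ Fin.succ).det : ℤ) : ℤ_[p])‖ ≤ 1 :=
      PadicInt.norm_le_one _
    have hlt : ¬ ‖((((∑ i, ∑ j, A i j : ℕ) : ℤ) *
        ((LaplacianMat A).submatrix Fin.succ Fin.succ).det : ℤ) : ℤ_[p])‖ < 1 := by
      rw [PadicInt.norm_int_lt_one_iff_dvd]
      exact hreg
    linarith [lt_or_eq_of_le hle]
  have hunit : IsUnit w := by
    rw [PowerSeries.isUnit_iff_constantCoeff]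
    show IsUnit (φ w)
    rw [hφw, ← hkk]
    exact hunit0.neg
  refine ⟨hunit.unit, ?_⟩
  rw [IsUnit.unit_spec]
  have hMser : Mser p A S = B.det := rfl
  rw [hMser, hdetB, hc, hw]
  ring
end
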